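/- arXiv:2005.06329 — 2 statements merged into one kernel-verified Lean document; each statement's English description precedes it below -/
import Mathlib

section
/- Let k ∈ ℕ, let S_1, …, S_m (m ≥ 1) be binary strings of length ℓ ≥ 1, let T = γ(S_1)·γ(S_2)⋯γ(S_m) and c = (4k+12)ℓ + 2k+4 = |γ(S_1)|. If C is a k-approximate cover of T under the Hamming distance with |C| = c, then the binary string S = ψ(C) satisfies Ham(S, S_i) ≤ k for all i = 1, …, m. -/
/-- Hamming distance between two (equal-length) strings:
the number of positions where they differ. -/
def ham : List Bool → List Bool → ℕ
  | x :: U, y :: V => (if x = y then 0 else 1) + ham U V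
  | _, _ => 0

/-- The morphism `φ`: `φ(0) = 0^{2k+4} 1010 0^{2k+4}` and `φ(1) = 0^{2k+4} 1011 0^{2k+4}`,
with `0 ↦ false`, `1 ↦ true`. -/
def phi (k : ℕ) (S : List Bool) : List Bool :=
  S.flatMap fun x =>
    List.replicate (2 * k + 4) false ++ [true, false, true, x] ++
      List.replicate (2 * k + 4) false

/-- `γ(S) = 1^{2k+4} · φ(S)`. -/
def gamma (k : ℕ) (S : List Bool) : List Bool :=
  List.replicate (2 * k + 4) true ++ phi k S

/-- `ψ(U)`: the binary string of length `ℓ` whose `j`-th letter is `U[(j+1)(4k+12) - 1]`. -/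
def psi (k ℓ : ℕ) (U : List Bool) : List Bool :=
  (List.range ℓ).map fun j => U.getD ((j + 1) * (4 * k + 12) - 1) false

/-- `C` is a `k`-approximate cover of `T` under the Hamming distance: `|C| < |T|` and every
position `t` of `T` is covered by a `k`-approximate occurrence of `C` in `T`. -/
def IsApproxCover (k : ℕ) (C T : List Bool) : Prop :=
  C.length < T.length ∧
    ∀ t < T.length, ∃ i, i + C.length ≤ T.length ∧
      ham C ((T.drop i).take C.length) ≤ k ∧ i ≤ t ∧ t < i + C.length

/-! ### Auxiliary definitions and lemmas -/

theorem ham_le_len (U V : List Bool) : ham U V ≤ U.length := by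
  induction U generalizing V with
  | nil => cases V <;> simp [ham]
  | cons x U ih =>
    cases V with
    | nil => simp [ham]
    | cons y V =>
      simp only [ham, List.length_cons]
      have := ih V
      split <;> omega

theorem ham_eq_sum (U : List Bool) : ∀ V : List Bool, U.length = V.length →
    ham U V = ∑ j ∈ Finset.range U.length,
      (if U.getD j false = V.getD j false then 0 else 1) := by
  induction U with
  | nil => intro V h; simp [ham]
  | cons x U ih =>
    intro V h
    cases V with
    | nil => simp at h
    | cons y V =>
      simp only [List.length_cons] at h ⊢
      rw [Finset.sum_range_succ']
      simp only [List.getD_cons_succ, List.getD_cons_zero]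
      rw [ham, ih V (by omega)]
      omega

theorem ham_eq_card (U V : List Bool) (h : U.length = V.length) :
    ham U V = ((Finset.range U.length).filter
      (fun j => ¬ (U.getD j false = V.getD j false))).card := by
  rw [ham_eq_sum U V h, Finset.card_filter]
  refine Finset.sum_congr rfl fun j _ => ?_
  by_cases hj : U.getD j false = V.getD j false <;> simp [hj]

def cval (k : ℕ) (S : List Bool) (r : ℕ) : Bool :=
  if r % (4*k+12) = 2*k+4 ∨ r % (4*k+12) = 2*k+6 then true
  else if r % (4*k+12) = 2*k+7 then S.getD (r / (4*k+12)) false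
  else false

def bval (k : ℕ) (S : List Bool) (r : ℕ) : Bool :=
  if r < 2*k+4 then true else cval k S (r - (2*k+4))

def chunk (k : ℕ) (x : Bool) : List Bool :=
  List.replicate (2 * k + 4) false ++ [true, false, true, x] ++
      List.replicate (2 * k + 4) false

theorem chunk_len (k : ℕ) (x : Bool) : (chunk k x).length = 4*k+12 := by
  simp [chunk]; omega

theorem chunk_getD (k : ℕ) (x : Bool) (o : ℕ) (ho : o < 4*k+12) :
    (chunk k x).getD o false =
      if o = 2*k+4 ∨ o = 2*k+6 then true else if o = 2*k+7 then x else false := by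
  unfold chunk
  rcases Nat.lt_or_ge o (2*k+4) with h1 | h1
  · rw [List.getD_append _ _ _ _ (by simp [h1]; omega)]
    rw [List.getD_append _ _ _ _ (by simp; omega)]
    rw [List.getD_eq_getElem _ _ (by simp; omega)]
    rw [List.getElem_replicate]
    split_ifs <;> first | rfl | omega
  · rcases Nat.lt_or_ge o (2*k+8) with h2 | h2
    · rw [List.getD_append _ _ _ _ (by simp; omega)]
      rw [List.getD_append_right _ _ _ _ (by simp; omega)]
      simp only [List.length_replicate]
      have h4 : o - (2*k+4) < 4 := by omega
      interval_cases h : o - (2*k+4) <;>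
        [skip; skip; skip; skip] <;>
        simp only [List.getD_cons_zero, List.getD_cons_succ] <;>
        split_ifs <;> first | rfl | omega
    · rw [List.getD_append_right _ _ _ _ (by simp; omega)]
      simp only [List.length_append, List.length_replicate, List.length_cons]
      rw [List.getD_eq_getElem _ _ (by simp; omega)]
      rw [List.getElem_replicate]
      split_ifs <;> first | rfl | omega

theorem phi_cons (k : ℕ) (x : Bool) (S : List Bool) :
    phi k (x :: S) = chunk k x ++ phi k S := by
  simp [phi, chunk]

theorem phi_len (k : ℕ) (S : List Bool) : (phi k S).length = S.length * (4*k+12) := by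
  induction S with
  | nil => simp [phi]
  | cons x S ih =>
    rw [phi_cons, List.length_append, ih, chunk_len, List.length_cons]
    ring

theorem phi_getD (k : ℕ) (S : List Bool) : ∀ r, r < S.length * (4*k+12) →
    (phi k S).getD r false = cval k S r := by
  induction S with
  | nil => intro r hr; simp at hr
  | cons x S ih =>
    intro r hr
    rw [phi_cons]
    rcases Nat.lt_or_ge r (4*k+12) with h1 | h1
    · rw [List.getD_append _ _ _ _ (by rw [chunk_len]; exact h1)]
      rw [chunk_getD k x r h1]
      unfold cval
      rw [Nat.mod_eq_of_lt h1, Nat.div_eq_of_lt h1]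
      simp
    · rw [List.getD_append_right _ _ _ _ (by rw [chunk_len]; exact h1)]
      rw [chunk_len, ih (r - (4*k+12)) (by rw [List.length_cons, Nat.succ_mul] at hr; omega)]
      unfold cval
      have h2 : r = (4*k+12) + (r - (4*k+12)) := by omega
      have h3 : r % (4*k+12) = (r - (4*k+12)) % (4*k+12) := by
        conv_lhs => rw [h2]
        rw [Nat.add_mod_left]
      have h4 : r / (4*k+12) = (r - (4*k+12)) / (4*k+12) + 1 := by
        conv_lhs => rw [h2]
        rw [Nat.add_div_left _ (by omega)]
      rw [h3, h4]
      simp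

theorem gamma_len (k : ℕ) (S : List Bool) :
    (gamma k S).length = 2*k+4 + S.length * (4*k+12) := by
  simp [gamma, phi_len]

theorem gamma_getD (k : ℕ) (S : List Bool) (r : ℕ) (hr : r < 2*k+4 + S.length * (4*k+12)) :
    (gamma k S).getD r false = bval k S r := by
  unfold gamma bval
  rcases Nat.lt_or_ge r (2*k+4) with h1 | h1
  · rw [List.getD_append _ _ _ _ (by simp [h1])]
    rw [List.getD_eq_getElem _ _ (by simp [h1]), List.getElem_replicate, if_pos h1]
  · rw [List.getD_append_right _ _ _ _ (by simp [h1])]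
    rw [List.length_replicate, phi_getD k S _ (by omega), if_neg (by omega)]

theorem flatten_len (c : ℕ) (L : List (List Bool)) (h : ∀ x ∈ L, x.length = c) :
    L.flatten.length = L.length * c := by
  induction L with
  | nil => simp
  | cons x L ih =>
    simp only [List.flatten_cons, List.length_append, List.length_cons]
    rw [ih (fun y hy => h y (by simp [hy])), h x (by simp)]
    ring

theorem flatten_getD (c : ℕ) (hc : 0 < c) (L : List (List Bool)) :
    ∀ g, (∀ x ∈ L, x.length = c) → g < L.length * c →
    L.flatten.getD g false = (L.getD (g/c) []).getD (g % c) false := by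
  induction L with
  | nil => intro g _ hg; simp at hg
  | cons x L ih =>
    intro g h hg
    simp only [List.flatten_cons]
    rcases Nat.lt_or_ge g c with h1 | h1
    · rw [List.getD_append _ _ _ _ (by rw [h x (by simp)]; exact h1)]
      rw [Nat.div_eq_of_lt h1, Nat.mod_eq_of_lt h1, List.getD_cons_zero]
    · rw [List.getD_append_right _ _ _ _ (by rw [h x (by simp)]; exact h1)]
      rw [h x (by simp)]
      rw [ih (g - c) (fun y hy => h y (by simp [hy]))
        (by rw [List.length_cons, Nat.succ_mul] at hg; omega)]
      have h2 : g = c + (g - c) := by omega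
      have h3 : g % c = (g - c) % c := by conv_lhs => rw [h2, Nat.add_mod_left]
      have h4 : g / c = (g - c) / c + 1 := by
        conv_lhs => rw [h2, Nat.add_div_left _ hc]
      rw [h3, h4, List.getD_cons_succ]

theorem bval_run (k : ℕ) (S : List Bool) (r : ℕ) (hr : r < 2*k+4) :
    bval k S r = true := by
  unfold bval; rw [if_pos hr]

theorem bval_at (k : ℕ) (S : List Bool) (j o : ℕ) (ho : o < 4*k+12) :
    bval k S (2*k+4 + (j*(4*k+12) + o)) =
      if o = 2*k+4 ∨ o = 2*k+6 then true
      else if o = 2*k+7 then S.getD j false else false := by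
  unfold bval cval
  rw [if_neg (by omega)]
  have h1 : 2*k+4 + (j*(4*k+12) + o) - (2*k+4) = j*(4*k+12) + o := by omega
  rw [h1, Nat.mul_comm j (4*k+12), Nat.mul_add_mod, Nat.mod_eq_of_lt ho]
  rw [Nat.mul_add_div (by omega), Nat.div_eq_of_lt ho]
  norm_num

theorem bval_true_o (k : ℕ) (S : List Bool) (r : ℕ) (hr : 2*k+4 ≤ r)
    (hb : bval k S r = true) :
    (r - (2*k+4)) % (4*k+12) = 2*k+4 ∨ (r - (2*k+4)) % (4*k+12) = 2*k+6 ∨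
      (r - (2*k+4)) % (4*k+12) = 2*k+7 := by
  unfold bval cval at hb
  rw [if_neg (by omega)] at hb
  split_ifs at hb with h1 h2 <;> tauto

theorem three_in_window (k u : ℕ) (hu : 2*k+4 ≤ u) :
    ((Finset.Ico u (u + (2*k+4))).filter (fun r =>
      (r - (2*k+4)) % (4*k+12) = 2*k+4 ∨ (r - (2*k+4)) % (4*k+12) = 2*k+6 ∨
      (r - (2*k+4)) % (4*k+12) = 2*k+7)).card ≤ 3 := by
  have h := Finset.card_le_card_of_injOn (f := fun r => (r - (2*k+4)) % (4*k+12))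
    (s := (Finset.Ico u (u + (2*k+4))).filter (fun r =>
      (r - (2*k+4)) % (4*k+12) = 2*k+4 ∨ (r - (2*k+4)) % (4*k+12) = 2*k+6 ∨
      (r - (2*k+4)) % (4*k+12) = 2*k+7))
    (t := ({2*k+4, 2*k+6, 2*k+7} : Finset ℕ)) ?_ ?_
  · refine h.trans ?_
    refine (Finset.card_insert_le _ _).trans ?_
    refine Nat.succ_le_succ ?_
    refine (Finset.card_insert_le _ _).trans ?_
    simp
  · intro r hr
    simp only [Finset.mem_coe, Finset.mem_filter, Finset.mem_Ico] at hr
    simp only [Finset.mem_coe, Finset.mem_insert, Finset.mem_singleton]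
    tauto
  · intro r1 h1 r2 h2 heq
    simp only [Finset.coe_filter, Set.mem_setOf_eq, Finset.mem_Ico] at h1 h2
    simp only at heq
    have e1 : r1 - (2*k+4) ≡ r2 - (2*k+4) [MOD 4*k+12] := heq
    rcases Nat.lt_or_ge (r1 - (2*k+4)) (r2 - (2*k+4)) with h | h
    · exfalso
      have hdvd : (4*k+12) ∣ ((r2 - (2*k+4)) - (r1 - (2*k+4))) :=
        (Nat.modEq_iff_dvd' (by omega)).mp e1
      have := Nat.le_of_dvd (by omega) hdvd
      omega
    · rcases Nat.lt_or_ge (r2 - (2*k+4)) (r1 - (2*k+4)) with h' | h'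
      · exfalso
        have hdvd : (4*k+12) ∣ ((r1 - (2*k+4)) - (r2 - (2*k+4))) :=
          (Nat.modEq_iff_dvd' (by omega)).mp e1.symm
        have := Nat.le_of_dvd (by omega) hdvd
        omega
      · omega

theorem occD (k c : ℕ) (C T : List Bool) (hC : C.length = c) (i : ℕ) (hic : i + c ≤ T.length)
    (hham : ham C ((T.drop i).take c) ≤ k) :
    ((Finset.range c).filter (fun p => ¬ (C.getD p false = T.getD (i+p) false))).card ≤ k := by
  have hWlen : ((T.drop i).take c).length = c := by simp; omega
  rw [ham_eq_card C _ (by rw [hWlen, hC]), hC] at hham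
  have heq : Finset.filter (fun p => ¬C.getD p false = T.getD (i + p) false) (Finset.range c)
      = Finset.filter (fun j => ¬C.getD j false = ((T.drop i).take c).getD j false)
          (Finset.range c) := by
    refine Finset.filter_congr ?_
    intro p hp
    rw [Finset.mem_range] at hp
    have h1 : ((T.drop i).take c).getD p false = T.getD (i+p) false := by
      rw [List.getD_eq_getElem _ _ (by rw [hWlen]; exact hp),
          List.getD_eq_getElem _ _ (by omega)]
      simp [List.getElem_take, List.getElem_drop]
    rw [h1]
  rw [heq]
  exact hham

theorem psi_len (k ℓ : ℕ) (U : List Bool) : (psi k ℓ U).length = ℓ := by simp [psi]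

theorem psi_getD (k ℓ : ℕ) (U : List Bool) (j : ℕ) (hj : j < ℓ) :
    (psi k ℓ U).getD j false = U.getD ((j + 1) * (4 * k + 12) - 1) false := by
  rw [List.getD_eq_getElem _ _ (by rw [psi_len]; exact hj)]
  simp [psi]

theorem pairs_bound (G : Finset ℕ) (n Mv u1 u2 : ℕ) (h12 : u1 < u2) (hlt : u2 < Mv + u1)
    (hmem : ∀ j < n, (j*Mv + u1) ∈ G ∧ (j*Mv + u2) ∈ G) : 2*n ≤ G.card := by
  have hcard : ((Finset.range n).biUnion (fun j => {j*Mv + u1, j*Mv + u2})).card = 2*n := by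
    rw [Finset.card_biUnion ?_]
    · rw [Finset.sum_congr rfl (fun j _ => by
        rw [Finset.card_insert_of_notMem (by simp; omega), Finset.card_singleton])]
      rw [Finset.sum_const, Finset.card_range, smul_eq_mul]
      omega
    · intro j1 _ j2 _ hne
      have hkey : (j1+1)*Mv ≤ j2*Mv ∨ (j2+1)*Mv ≤ j1*Mv := by
        rcases Nat.lt_or_ge j1 j2 with h | h
        · exact Or.inl (Nat.mul_le_mul_right _ (by omega))
        · exact Or.inr (Nat.mul_le_mul_right _ (by omega))
      have e1 : (j1+1)*Mv = j1*Mv + Mv := by ring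
      have e2 : (j2+1)*Mv = j2*Mv + Mv := by ring
      simp only [Finset.disjoint_left, Finset.mem_insert, Finset.mem_singleton]
      rintro a (rfl | rfl) <;> omega
  rw [← hcard]
  apply Finset.card_le_card
  intro a ha
  rw [Finset.mem_biUnion] at ha
  obtain ⟨j, hj, hja⟩ := ha
  rw [Finset.mem_range] at hj
  simp only [Finset.mem_insert, Finset.mem_singleton] at hja
  rcases hja with rfl | rfl
  · exact (hmem j hj).1
  · exact (hmem j hj).2

theorem qr_div (c q r : ℕ) (hr : r < c) : (q*c + r)/c = q := by
  rw [Nat.mul_comm q c, Nat.mul_add_div (by omega), Nat.div_eq_of_lt hr]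
  omega

theorem qr_mod (c q r : ℕ) (hr : r < c) : (q*c + r)%c = r := by
  rw [Nat.mul_comm q c, Nat.mul_add_mod, Nat.mod_eq_of_lt hr]

theorem stmt7 (k ℓ m : ℕ) (hm : 1 ≤ m) (hℓ : 1 ≤ ℓ)
    (Ss : List (List Bool)) (hSs : Ss.length = m)
    (hlen : ∀ Si ∈ Ss, Si.length = ℓ)
    (T : List Bool) (hT : T = (Ss.map (gamma k)).flatten)
    (c : ℕ) (hc : c = (4 * k + 12) * ℓ + 2 * k + 4)
    (C : List Bool) (hC : C.length = c)
    (hcov : IsApproxCover k C T) :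
    ∀ Si ∈ Ss, ham (psi k ℓ C) Si ≤ k := by
  intro Si hSi
  have hcM : c = 2*k+4 + ℓ*(4*k+12) := by rw [hc, Nat.mul_comm]; omega
  have hc0 : 0 < c := by omega
  have hglen : ∀ x ∈ Ss.map (gamma k), x.length = c := by
    intro x hx
    rw [List.mem_map] at hx
    obtain ⟨y, hy, rfl⟩ := hx
    rw [gamma_len, hlen y hy, hcM]
  have hTlen : T.length = m * c := by
    rw [hT, flatten_len c _ hglen, List.length_map, hSs]
  have hTg : ∀ g, g < m*c → T.getD g false = bval k (Ss.getD (g/c) []) (g % c) := by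
    intro g hg
    have hgdiv : g / c < m := by
      rw [Nat.div_lt_iff_lt_mul hc0]; omega
    have hgdiv' : g / c < Ss.length := by rw [hSs]; exact hgdiv
    have hmem : Ss.getD (g/c) [] ∈ Ss := by
      rw [List.getD_eq_getElem _ _ hgdiv']
      exact List.getElem_mem _
    rw [hT, flatten_getD c hc0 _ g hglen (by rw [List.length_map, hSs]; exact hg)]
    have hmap : (Ss.map (gamma k)).getD (g/c) [] = gamma k (Ss.getD (g/c) []) := by
      rw [List.getD_eq_getElem _ _ (by rw [List.length_map]; exact hgdiv'),
          List.getElem_map, List.getD_eq_getElem _ _ hgdiv']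
    rw [hmap, gamma_getD]
    rw [hlen _ hmem]
    have := Nat.mod_lt g hc0
    omega
  obtain ⟨b, hbl, hSb⟩ := List.mem_iff_getElem.mp hSi
  have hbm : b < m := by rw [← hSs]; exact hbl
  have hSbD : Ss.getD b [] = Si := by rw [List.getD_eq_getElem _ _ hbl, hSb]
  have hSilen : Si.length = ℓ := hlen Si hSi
  have hposlt : ∀ j o, j < ℓ → o < 4*k+12 → 2*k+4 + (j*(4*k+12) + o) < c := by
    intro j o hj ho
    have h1 : (j+1)*(4*k+12) ≤ ℓ*(4*k+12) := Nat.mul_le_mul_right _ (by omega)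
    have h2 : (j+1)*(4*k+12) = j*(4*k+12) + (4*k+12) := by ring
    omega
  have hcle : c ≤ m*c := Nat.le_mul_of_pos_left c (by omega)
  have hbc : (b+1)*c ≤ m*c := Nat.mul_le_mul_right _ (by omega)
  have hbc' : (b+1)*c = b*c + c := by ring
  have hB : ∀ j o, j < ℓ → o < 4*k+12 →
      T.getD (2*k+4 + (j*(4*k+12) + o)) false =
        (if o = 2*k+4 ∨ o = 2*k+6 then true
         else if o = 2*k+7 then (Ss.getD 0 []).getD j false else false) := by
    intro j o hj ho
    have hp := hposlt j o hj ho
    rw [hTg _ (by omega), Nat.div_eq_of_lt hp, Nat.mod_eq_of_lt hp, bval_at k _ j o ho]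
  have hBrun : ∀ p, p < 2*k+4 → T.getD p false = true := by
    intro p hp
    rw [hTg _ (by omega), Nat.mod_eq_of_lt (by omega : p < c)]
    exact bval_run k _ p hp
  -- occurrence covering position 0 is exactly aligned
  have hT0 : 0 < T.length := by
    rw [hTlen]; exact Nat.mul_pos (by omega) hc0
  obtain ⟨i0, hi0len, hham0, hi0le, hi0lt⟩ := hcov.2 0 hT0
  rw [hC] at hi0len hham0 hi0lt
  have hi00 : i0 = 0 := by omega
  subst hi00
  have hD0 : ((Finset.range c).filter
      (fun p => ¬ (C.getD p false = T.getD (0+p) false))).card ≤ k :=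
    occD k c C T hC 0 (by omega) hham0
  -- occurrence covering position b*c
  obtain ⟨i1, hi1len, hham1, hi1le, hi1lt⟩ := hcov.2 (b*c) (by
    rw [hTlen]
    calc b*c < (b+1)*c := by omega
      _ ≤ m*c := hbc)
  rw [hC] at hi1len hham1 hi1lt
  have hD1 : ((Finset.range c).filter
      (fun p => ¬ (C.getD p false = T.getD (i1+p) false))).card ≤ k :=
    occD k c C T hC i1 hi1len hham1
  by_cases hali : i1 = b*c
  · -- aligned occurrence: sample positions
    rw [hali] at hD1
    rw [ham_eq_card _ _ (by rw [psi_len, hSilen]), psi_len]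
    refine le_trans (Finset.card_le_card_of_injOn (fun j => (j+1)*(4*k+12)-1) ?_ ?_) hD1
    · intro j hj
      rw [Finset.mem_coe, Finset.mem_filter, Finset.mem_range] at hj
      obtain ⟨hjl, hjne⟩ := hj
      rw [Finset.mem_coe, Finset.mem_filter, Finset.mem_range]
      have h2 : (j+1)*(4*k+12) = j*(4*k+12) + (4*k+12) := by ring
      have hform : (j+1)*(4*k+12) - 1 = 2*k+4 + (j*(4*k+12) + (2*k+7)) := by omega
      have hp : (j+1)*(4*k+12) - 1 < c := by
        rw [hform]; exact hposlt j (2*k+7) hjl (by omega)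
      refine ⟨hp, ?_⟩
      intro hcon
      apply hjne
      have hW : T.getD (b*c + ((j+1)*(4*k+12) - 1)) false = Si.getD j false := by
        rw [hTg _ (by omega), qr_div c b _ hp, qr_mod c b _ hp, hSbD]
        rw [hform, bval_at k Si j (2*k+7) (by omega)]
        rw [if_neg (by omega), if_pos rfl]
      rw [psi_getD k ℓ C j hjl, hcon, hW]
    · intro j1 h1 j2 h2 heq2
      simp only at heq2
      have a1 : 1*(4*k+12) ≤ (j1+1)*(4*k+12) := Nat.mul_le_mul_right _ (by omega)
      have a2 : 1*(4*k+12) ≤ (j2+1)*(4*k+12) := Nat.mul_le_mul_right _ (by omega)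
      have hmul : (j1+1)*(4*k+12) = (j2+1)*(4*k+12) := by omega
      have := Nat.eq_of_mul_eq_mul_right (by omega : 0 < 4*k+12) hmul
      omega
  · -- misaligned occurrence
    have hd1 : 1 ≤ b*c - i1 := by omega
    set d := b*c - i1 with hdd
    have hdc : d < c := by omega
    have hb1 : 1 ≤ b := by
      by_contra hb0
      have hb00 : b = 0 := by omega
      rw [hb00] at hdd
      simp at hdd
      omega
    have hb1c : (b-1)*c + c = b*c := by
      have hh : (b-1)+1 = b := by omega
      calc (b-1)*c + c = ((b-1)+1)*c := by ring
        _ = b*c := by rw [hh]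
    set e := c - d with hee
    set G := (Finset.range c).filter
      (fun p => ¬ (T.getD p false = T.getD (i1+p) false)) with hGdef
    have hGmem : ∀ p, p < c → ¬ (T.getD p false = T.getD (i1+p) false) → p ∈ G := by
      intro p h1 h2
      rw [hGdef, Finset.mem_filter, Finset.mem_range]
      exact ⟨h1, h2⟩
    have hG2k : G.card ≤ 2*k := by
      have hGsub : G ⊆ (Finset.range c).filter
            (fun p => ¬ (C.getD p false = T.getD (0+p) false))
          ∪ (Finset.range c).filter
            (fun p => ¬ (C.getD p false = T.getD (i1+p) false)) := by
        intro p hp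
        rw [hGdef, Finset.mem_filter, Finset.mem_range] at hp
        obtain ⟨hpc, hpne⟩ := hp
        rw [Finset.mem_union, Finset.mem_filter, Finset.mem_filter, Finset.mem_range]
        by_cases hCp : C.getD p false = T.getD p false
        · right
          refine ⟨hpc, ?_⟩
          intro hcon
          exact hpne (by rw [← hCp, hcon])
        · left
          exact ⟨hpc, by rw [zero_add]; exact hCp⟩
      refine le_trans (Finset.card_le_card hGsub)
        (le_trans (Finset.card_union_le _ _) ?_)
      omega
    have hW1 : ∀ X, X < c → T.getD (i1 + (d + X)) false = bval k (Ss.getD b []) X := by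
      intro X hX
      have h1 : i1 + (d + X) = b*c + X := by omega
      rw [h1, hTg _ (by omega), qr_div c b X hX, qr_mod c b X hX]
    have hW2 : ∀ X, e + X < c → T.getD (i1 + X) false = bval k (Ss.getD (b-1) []) (e + X) := by
      intro X hX
      have h1 : i1 + X = (b-1)*c + (e + X) := by omega
      rw [h1, hTg _ (by omega), qr_div c (b-1) _ hX, qr_mod c (b-1) _ hX]
    have hWS1 : ∀ j o, j < ℓ → o < 4*k+12 →
        T.getD (i1 + (d + (2*k+4 + (j*(4*k+12) + o)))) false =
          (if o = 2*k+4 ∨ o = 2*k+6 then true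
           else if o = 2*k+7 then (Ss.getD b []).getD j false else false) := by
      intro j o hj ho
      rw [hW1 _ (hposlt j o hj ho), bval_at k _ j o ho]
    have hWS2 : ∀ j o, j < ℓ → o + e < 4*k+12 →
        T.getD (i1 + (2*k+4 + (j*(4*k+12) + o))) false =
          (if o+e = 2*k+4 ∨ o+e = 2*k+6 then true
           else if o+e = 2*k+7 then (Ss.getD (b-1) []).getD j false else false) := by
      intro j o hj ho
      rw [hW2 _ (by have := hposlt j (o+e) hj ho; omega)]
      have hr : e + (2*k+4 + (j*(4*k+12) + o)) = 2*k+4 + (j*(4*k+12) + (o+e)) := by omega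
      rw [hr, bval_at k _ j (o+e) ho]
    -- a generic membership helper for the "small shift" cases
    have hGpair : ∀ u, 4*k+6 ≤ u → u ≤ 4*k+12 →
        (∀ j, j < ℓ → T.getD (j*(4*k+12) + u) false ≠ T.getD (i1 + (j*(4*k+12) + u)) false) →
        ∀ j, j < ℓ → (j*(4*k+12) + u) ∈ G := by
      intro u hu1 hu2 hval j hj
      refine hGmem _ ?_ (hval j hj)
      have := hposlt j (2*k+8) hj (by omega)
      omega
    rcases (by omega : d ≤ 2*k+3 ∨ e ≤ 2*k+3 ∨ (2*k+4 ≤ d ∧ 2*k+4 ≤ e)) with hS1 | hS2 | hLL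
    · -- small right-shift: two mismatches per chunk
      have hu1 : ∀ j, j < ℓ → (j*(4*k+12) + (4*k+8)) ∈ G := by
        refine hGpair (4*k+8) (by omega) (by omega) ?_
        intro j hj
        have eB : T.getD (j*(4*k+12) + (4*k+8)) false = true := by
          have h1 : j*(4*k+12) + (4*k+8) = 2*k+4 + (j*(4*k+12) + (2*k+4)) := by omega
          rw [h1, hB j (2*k+4) hj (by omega)]
          simp
        have eW : T.getD (i1 + (j*(4*k+12) + (4*k+8))) false = false := by
          have h1 : j*(4*k+12) + (4*k+8) = d + (2*k+4 + (j*(4*k+12) + (2*k+4 - d))) := by omega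
          rw [h1, hWS1 j (2*k+4-d) hj (by omega)]
          rw [if_neg (by omega), if_neg (by omega)]
        rw [eB, eW]
        simp
      have hpairs : 2*ℓ ≤ G.card := by
        rcases eq_or_ne d 2 with hd2 | hd2
        · refine pairs_bound G ℓ (4*k+12) (4*k+8) (4*k+12) (by omega) (by omega) ?_
          intro j hj
          refine ⟨hu1 j hj, ?_⟩
          refine hGpair (4*k+12) (by omega) (by omega) ?_ j hj
          intro j' hj'
          have eB : T.getD (j'*(4*k+12) + (4*k+12)) false = false := by
            have h1 : j'*(4*k+12) + (4*k+12) = 2*k+4 + (j'*(4*k+12) + (2*k+8)) := by omega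
            rw [h1, hB j' (2*k+8) hj' (by omega)]
            rw [if_neg (by omega), if_neg (by omega)]
          have eW : T.getD (i1 + (j'*(4*k+12) + (4*k+12))) false = true := by
            have h1 : j'*(4*k+12) + (4*k+12) = d + (2*k+4 + (j'*(4*k+12) + (2*k+6))) := by omega
            rw [h1, hWS1 j' (2*k+6) hj' (by omega)]
            simp
          rw [eB, eW]
          simp
        · refine pairs_bound G ℓ (4*k+12) (4*k+8) (4*k+10) (by omega) (by omega) ?_
          intro j hj
          refine ⟨hu1 j hj, ?_⟩
          refine hGpair (4*k+10) (by omega) (by omega) ?_ j hj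
          intro j' hj'
          have eB : T.getD (j'*(4*k+12) + (4*k+10)) false = true := by
            have h1 : j'*(4*k+12) + (4*k+10) = 2*k+4 + (j'*(4*k+12) + (2*k+6)) := by omega
            rw [h1, hB j' (2*k+6) hj' (by omega)]
            simp
          have eW : T.getD (i1 + (j'*(4*k+12) + (4*k+10))) false = false := by
            have h1 : j'*(4*k+12) + (4*k+10)
                = d + (2*k+4 + (j'*(4*k+12) + (2*k+6 - d))) := by omega
            rw [h1, hWS1 j' (2*k+6-d) hj' (by omega)]
            rw [if_neg (by omega), if_neg (by omega)]
          rw [eB, eW]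
          simp
      have hlk : ℓ ≤ k := by omega
      calc ham (psi k ℓ C) Si ≤ (psi k ℓ C).length := ham_le_len _ _
        _ = ℓ := psi_len k ℓ C
        _ ≤ k := hlk
    · -- small left-shift: two mismatches per chunk
      have he1 : 1 ≤ e := by omega
      have hpairs : 2*ℓ ≤ G.card := by
        rcases (by omega : e = 1 ∨ e = 2 ∨ e = 3 ∨ 4 ≤ e) with he | he | he | he
        · refine pairs_bound G ℓ (4*k+12) (4*k+8) (4*k+9) (by omega) (by omega) ?_
          intro j hj
          constructor
          · refine hGpair (4*k+8) (by omega) (by omega) ?_ j hj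
            intro j' hj'
            have eB : T.getD (j'*(4*k+12) + (4*k+8)) false = true := by
              have h1 : j'*(4*k+12) + (4*k+8) = 2*k+4 + (j'*(4*k+12) + (2*k+4)) := by omega
              rw [h1, hB j' (2*k+4) hj' (by omega)]
              simp
            have eW : T.getD (i1 + (j'*(4*k+12) + (4*k+8))) false = false := by
              have h1 : j'*(4*k+12) + (4*k+8) = 2*k+4 + (j'*(4*k+12) + (2*k+4)) := by omega
              rw [h1, hWS2 j' (2*k+4) hj' (by omega)]
              rw [if_neg (by omega), if_neg (by omega)]
            rw [eB, eW]
            simp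
          · refine hGpair (4*k+9) (by omega) (by omega) ?_ j hj
            intro j' hj'
            have eB : T.getD (j'*(4*k+12) + (4*k+9)) false = false := by
              have h1 : j'*(4*k+12) + (4*k+9) = 2*k+4 + (j'*(4*k+12) + (2*k+5)) := by omega
              rw [h1, hB j' (2*k+5) hj' (by omega)]
              rw [if_neg (by omega), if_neg (by omega)]
            have eW : T.getD (i1 + (j'*(4*k+12) + (4*k+9))) false = true := by
              have h1 : j'*(4*k+12) + (4*k+9) = 2*k+4 + (j'*(4*k+12) + (2*k+5)) := by omega
              rw [h1, hWS2 j' (2*k+5) hj' (by omega)]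
              rw [if_pos (by omega)]
            rw [eB, eW]
            simp
        · refine pairs_bound G ℓ (4*k+12) (4*k+6) (4*k+10) (by omega) (by omega) ?_
          intro j hj
          constructor
          · refine hGpair (4*k+6) (by omega) (by omega) ?_ j hj
            intro j' hj'
            have eB : T.getD (j'*(4*k+12) + (4*k+6)) false = false := by
              have h1 : j'*(4*k+12) + (4*k+6) = 2*k+4 + (j'*(4*k+12) + (2*k+2)) := by omega
              rw [h1, hB j' (2*k+2) hj' (by omega)]
              rw [if_neg (by omega), if_neg (by omega)]
            have eW : T.getD (i1 + (j'*(4*k+12) + (4*k+6))) false = true := by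
              have h1 : j'*(4*k+12) + (4*k+6) = 2*k+4 + (j'*(4*k+12) + (2*k+2)) := by omega
              rw [h1, hWS2 j' (2*k+2) hj' (by omega)]
              rw [if_pos (by omega)]
            rw [eB, eW]
            simp
          · refine hGpair (4*k+10) (by omega) (by omega) ?_ j hj
            intro j' hj'
            have eB : T.getD (j'*(4*k+12) + (4*k+10)) false = true := by
              have h1 : j'*(4*k+12) + (4*k+10) = 2*k+4 + (j'*(4*k+12) + (2*k+6)) := by omega
              rw [h1, hB j' (2*k+6) hj' (by omega)]
              simp
            have eW : T.getD (i1 + (j'*(4*k+12) + (4*k+10))) false = false := by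
              have h1 : j'*(4*k+12) + (4*k+10) = 2*k+4 + (j'*(4*k+12) + (2*k+6)) := by omega
              rw [h1, hWS2 j' (2*k+6) hj' (by omega)]
              rw [if_neg (by omega), if_neg (by omega)]
            rw [eB, eW]
            simp
        · refine pairs_bound G ℓ (4*k+12) (4*k+7) (4*k+10) (by omega) (by omega) ?_
          intro j hj
          constructor
          · refine hGpair (4*k+7) (by omega) (by omega) ?_ j hj
            intro j' hj'
            have eB : T.getD (j'*(4*k+12) + (4*k+7)) false = false := by
              have h1 : j'*(4*k+12) + (4*k+7) = 2*k+4 + (j'*(4*k+12) + (2*k+3)) := by omega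
              rw [h1, hB j' (2*k+3) hj' (by omega)]
              rw [if_neg (by omega), if_neg (by omega)]
            have eW : T.getD (i1 + (j'*(4*k+12) + (4*k+7))) false = true := by
              have h1 : j'*(4*k+12) + (4*k+7) = 2*k+4 + (j'*(4*k+12) + (2*k+3)) := by omega
              rw [h1, hWS2 j' (2*k+3) hj' (by omega)]
              rw [if_pos (by omega)]
            rw [eB, eW]
            simp
          · refine hGpair (4*k+10) (by omega) (by omega) ?_ j hj
            intro j' hj'
            have eB : T.getD (j'*(4*k+12) + (4*k+10)) false = true := by
              have h1 : j'*(4*k+12) + (4*k+10) = 2*k+4 + (j'*(4*k+12) + (2*k+6)) := by omega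
              rw [h1, hB j' (2*k+6) hj' (by omega)]
              simp
            have eW : T.getD (i1 + (j'*(4*k+12) + (4*k+10))) false = false := by
              have h1 : j'*(4*k+12) + (4*k+10) = 2*k+4 + (j'*(4*k+12) + (2*k+6)) := by omega
              rw [h1, hWS2 j' (2*k+6) hj' (by omega)]
              rw [if_neg (by omega), if_neg (by omega)]
            rw [eB, eW]
            simp
        · refine pairs_bound G ℓ (4*k+12) (4*k+8) (4*k+10) (by omega) (by omega) ?_
          intro j hj
          constructor
          · refine hGpair (4*k+8) (by omega) (by omega) ?_ j hj
            intro j' hj'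
            have eB : T.getD (j'*(4*k+12) + (4*k+8)) false = true := by
              have h1 : j'*(4*k+12) + (4*k+8) = 2*k+4 + (j'*(4*k+12) + (2*k+4)) := by omega
              rw [h1, hB j' (2*k+4) hj' (by omega)]
              simp
            have eW : T.getD (i1 + (j'*(4*k+12) + (4*k+8))) false = false := by
              have h1 : j'*(4*k+12) + (4*k+8) = 2*k+4 + (j'*(4*k+12) + (2*k+4)) := by omega
              rw [h1, hWS2 j' (2*k+4) hj' (by omega)]
              rw [if_neg (by omega), if_neg (by omega)]
            rw [eB, eW]
            simp
          · refine hGpair (4*k+10) (by omega) (by omega) ?_ j hj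
            intro j' hj'
            have eB : T.getD (j'*(4*k+12) + (4*k+10)) false = true := by
              have h1 : j'*(4*k+12) + (4*k+10) = 2*k+4 + (j'*(4*k+12) + (2*k+6)) := by omega
              rw [h1, hB j' (2*k+6) hj' (by omega)]
              simp
            have eW : T.getD (i1 + (j'*(4*k+12) + (4*k+10))) false = false := by
              have h1 : j'*(4*k+12) + (4*k+10) = 2*k+4 + (j'*(4*k+12) + (2*k+6)) := by omega
              rw [h1, hWS2 j' (2*k+6) hj' (by omega)]
              rw [if_neg (by omega), if_neg (by omega)]
            rw [eB, eW]
            simp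
      have hlk : ℓ ≤ k := by omega
      calc ham (psi k ℓ C) Si ≤ (psi k ℓ C).length := ham_le_len _ _
        _ = ℓ := psi_len k ℓ C
        _ ≤ k := hlk
    · -- large shift: both run regions are destroyed, contradiction
      obtain ⟨hLd, hLe⟩ := hLL
      -- window 1 : positions [0, 2k+4)
      have hF1 : 2*k+1 ≤ ((Finset.range (2*k+4)).filter
          (fun p => ¬ (T.getD p false = T.getD (i1+p) false))).card := by
        have hc3 : ((Finset.range (2*k+4)).filter
            (fun p => T.getD p false = T.getD (i1+p) false)).card ≤ 3 := by
          refine le_trans (Finset.card_le_card_of_injOn (fun p => e + p) ?_ ?_)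
            (three_in_window k e (by omega))
          · intro p hp
            rw [Finset.mem_coe, Finset.mem_filter, Finset.mem_range] at hp
            obtain ⟨hplt, hpeq⟩ := hp
            simp only [Finset.mem_coe, Finset.mem_filter, Finset.mem_Ico]
            refine ⟨⟨by omega, by omega⟩, ?_⟩
            have h1 : T.getD p false = true := hBrun p hplt
            have h2 : T.getD (i1+p) false = true := by rw [← hpeq, h1]
            rw [hW2 p (by omega)] at h2
            exact bval_true_o k _ _ (by omega) h2
          · intro p1 _ p2 _ hpe
            simp only at hpe
            omega
        have hsplit := Finset.card_filter_add_card_filter_not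
          (s := Finset.range (2*k+4)) (p := fun p => T.getD p false = T.getD (i1+p) false)
        rw [Finset.card_range] at hsplit
        omega
      -- window 2 : positions [d, d+2k+4)
      have hF2 : 2*k+1 ≤ ((Finset.Ico d (d + (2*k+4))).filter
          (fun p => ¬ (T.getD p false = T.getD (i1+p) false))).card := by
        have hc3 : ((Finset.Ico d (d + (2*k+4))).filter
            (fun p => T.getD p false = T.getD (i1+p) false)).card ≤ 3 := by
          refine le_trans (Finset.card_le_card_of_injOn (fun p => p) ?_ ?_)
            (three_in_window k d (by omega))
          · intro p hp
            rw [Finset.mem_coe, Finset.mem_filter, Finset.mem_Ico] at hp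
            obtain ⟨⟨hp1, hp2⟩, hpeq⟩ := hp
            simp only [Finset.mem_coe, Finset.mem_filter, Finset.mem_Ico]
            refine ⟨⟨hp1, hp2⟩, ?_⟩
            have h2 : T.getD (i1+p) false = true := by
              have h1 : i1 + p = i1 + (d + (p - d)) := by omega
              rw [h1, hW1 (p-d) (by omega)]
              exact bval_run k _ _ (by omega)
            have h1 : T.getD p false = true := by rw [hpeq, h2]
            have h3 : T.getD p false = bval k (Ss.getD 0 []) p := by
              rw [hTg _ (by omega), Nat.div_eq_of_lt (by omega : p < c),
                Nat.mod_eq_of_lt (by omega : p < c)]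
            rw [h3] at h1
            exact bval_true_o k _ _ (by omega) h1
          · intro p1 _ p2 _ hpe
            exact hpe
        have hsplit := Finset.card_filter_add_card_filter_not
          (s := Finset.Ico d (d + (2*k+4)))
          (p := fun p => T.getD p false = T.getD (i1+p) false)
        rw [Nat.card_Ico] at hsplit
        omega
      have hsub1 : (Finset.range (2*k+4)).filter
          (fun p => ¬ (T.getD p false = T.getD (i1+p) false)) ⊆ G := by
        intro p hp
        rw [Finset.mem_filter, Finset.mem_range] at hp
        exact hGmem p (by omega) hp.2
      have hsub2 : (Finset.Ico d (d + (2*k+4))).filter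
          (fun p => ¬ (T.getD p false = T.getD (i1+p) false)) ⊆ G := by
        intro p hp
        rw [Finset.mem_filter, Finset.mem_Ico] at hp
        exact hGmem p (by omega) hp.2
      have hdisj : Disjoint
          ((Finset.range (2*k+4)).filter
            (fun p => ¬ (T.getD p false = T.getD (i1+p) false)))
          ((Finset.Ico d (d + (2*k+4))).filter
            (fun p => ¬ (T.getD p false = T.getD (i1+p) false))) := by
        rw [Finset.disjoint_left]
        intro p h1 h2
        rw [Finset.mem_filter, Finset.mem_range] at h1
        rw [Finset.mem_filter, Finset.mem_Ico] at h2
        omega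
      have hbig : 4*k+2 ≤ G.card := by
        have hcu := Finset.card_le_card (Finset.union_subset hsub1 hsub2)
        rw [Finset.card_union_of_disjoint hdisj] at hcu
        omega
      exact absurd hG2k (by omega)
end

section
/- Let k ∈ ℕ, let S_1, …, S_m (m ≥ 1) be binary strings of length ℓ ≥ 1, and let T' = γ(S_1)·γ(S_1)·γ(S_2)⋯γ(S_m)·1^{2k+4}·γ(S_m)·1^{2k+4}. If S is a binary string of length ℓ with Ham(S, S_i) ≤ k for all i = 1, …, m, then the string C = 1^{2k+4}·φ(S)·1^{2k+4}, of length c = |γ(S_1)| + 2k+4, is a k-approximate cover of T' under the Hamming distance (and hence also a k-approximate seed of T'). -/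
/-- `C` is a `k`-approximate seed of `T`: `2|C| ≤ |T|` and `C` is a `k`-approximate cover of
some superstring of `T` (a string having `T` as a factor). -/
def IsApproxSeed (k : ℕ) (C T : List Bool) : Prop :=
  2 * C.length ≤ T.length ∧ ∃ T' : List Bool, T <:+: T' ∧ IsApproxCover k C T'

lemma ham_refl (U : List Bool) : ham U U = 0 := by
  induction U with
  | nil => rfl
  | cons x U ih => simp [ham, ih]

lemma ham_append (U V A B : List Bool) (h : U.length = V.length) :
    ham (U ++ A) (V ++ B) = ham U V + ham A B := by
  induction U generalizing V with
  | nil =>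
    cases V with
    | nil => simp [ham]
    | cons y V => simp at h
  | cons x U ih =>
    cases V with
    | nil => simp at h
    | cons y V =>
      simp only [List.cons_append, ham, List.append_eq]
      rw [ih V (by simpa using h)]
      ring

lemma phi_cons_s9 (k : ℕ) (x : Bool) (X : List Bool) :
    phi k (x :: X) = (List.replicate (2 * k + 4) false ++ [true, false, true, x] ++
      List.replicate (2 * k + 4) false) ++ phi k X := by
  simp [phi, List.flatMap_cons]

lemma phi_length (k : ℕ) (X : List Bool) : (phi k X).length = X.length * (4 * k + 12) := by
  induction X with
  | nil => simp [phi]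
  | cons x X ih => simp [phi_cons_s9, ih]; ring

lemma ham_phi (k : ℕ) : ∀ S X : List Bool, S.length = X.length →
    ham (phi k S) (phi k X) = ham S X := by
  intro S
  induction S with
  | nil => intro X h; cases X with
    | nil => simp [phi, ham]
    | cons => simp at h
  | cons x S ih =>
    intro X h
    cases X with
    | nil => simp at h
    | cons y Y =>
      rw [phi_cons_s9, phi_cons_s9, ham_append _ _ _ _ (by simp)]
      rw [ih Y (by simpa using h)]
      rw [ham_append _ _ _ _ (by simp), ham_append _ _ _ _ rfl, ham_refl]
      simp [ham]

lemma occ_core (k : ℕ) (S X P W : List Bool) (hlen : X.length = S.length)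
    (hX : ham S X ≤ k)
    (hW : (List.replicate (2 * k + 4) true) <+: W) :
    ham (List.replicate (2 * k + 4) true ++ phi k S ++ List.replicate (2 * k + 4) true)
      (((P ++ (gamma k X ++ W)).drop P.length).take
        (List.replicate (2 * k + 4) true ++ phi k S ++ List.replicate (2 * k + 4) true).length) ≤ k := by
  obtain ⟨R, rfl⟩ := hW
  rw [List.drop_left]
  have hphi : (phi k X).length = (phi k S).length := by
    rw [phi_length, phi_length, hlen]
  have he : gamma k X ++ (List.replicate (2 * k + 4) true ++ R)
      = (List.replicate (2 * k + 4) true ++ phi k X ++ List.replicate (2 * k + 4) true) ++ R := by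
    simp [gamma]
  rw [he, List.take_left' (by simp [hphi])]
  rw [ham_append _ _ _ _ (by simp [hphi]), ham_append _ _ _ _ rfl, ham_refl,
    ham_phi _ _ _ hlen.symm]
  simpa using hX

lemma flatten_len_s9 (k ℓ : ℕ) (L : List (List Bool)) (h : ∀ X ∈ L, X.length = ℓ) :
    ((L.map (gamma k)).flatten).length = L.length * ((2 * k + 4) + ℓ * (4 * k + 12)) := by
  induction L with
  | nil => simp
  | cons X L ih =>
    simp only [List.map_cons, List.flatten_cons, List.length_append, List.length_cons]
    rw [ih (fun Y hY => h Y (List.mem_cons_of_mem _ hY))]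
    simp [gamma, phi_length, h X (List.mem_cons_self)]
    ring

lemma cover_aux (k : ℕ) (S : List Bool) :
    ∀ (L : List (List Bool)) (P Q T : List Bool),
      L ≠ [] →
      (∀ X ∈ L, X.length = S.length ∧ ham S X ≤ k) →
      T = P ++ (L.map (gamma k)).flatten ++ Q →
      (List.replicate (2 * k + 4) true) <+: Q →
      ∀ t, P.length ≤ t →
        t < P.length + L.length * ((2 * k + 4) + (phi k S).length) + (2 * k + 4) →
        ∃ i, i + (List.replicate (2 * k + 4) true ++ phi k S ++
            List.replicate (2 * k + 4) true).length ≤ T.length ∧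
          ham (List.replicate (2 * k + 4) true ++ phi k S ++ List.replicate (2 * k + 4) true)
            ((T.drop i).take (List.replicate (2 * k + 4) true ++ phi k S ++
              List.replicate (2 * k + 4) true).length) ≤ k ∧
          i ≤ t ∧ t < i + (List.replicate (2 * k + 4) true ++ phi k S ++
            List.replicate (2 * k + 4) true).length := by
  intro L
  induction L with
  | nil => intro _ _ _ h; exact absurd rfl h
  | cons X L ih =>
    intro P Q T _ hmem hT hQ t ht1 ht2
    have hXl : X.length = S.length := (hmem X (List.mem_cons_self)).1
    have hXh : ham S X ≤ k := (hmem X (List.mem_cons_self)).2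
    have hphiX : (phi k X).length = (phi k S).length := by
      rw [phi_length, phi_length, hXl]
    have hClen : (List.replicate (2 * k + 4) true ++ phi k S ++
        List.replicate (2 * k + 4) true).length = (2 * k + 4) + (phi k S).length + (2 * k + 4) := by
      simp; ring
    have hW : (List.replicate (2 * k + 4) true) <+: ((L.map (gamma k)).flatten ++ Q) := by
      cases L with
      | nil => simpa using hQ
      | cons Y L' =>
        simp only [List.map_cons, List.flatten_cons, gamma, List.append_assoc]
        exact List.prefix_append _ _
    have hQa : (2 * k + 4) ≤ ((L.map (gamma k)).flatten ++ Q).length := by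
      simpa using hW.length_le
    have hTeq : T = P ++ (gamma k X ++ ((L.map (gamma k)).flatten ++ Q)) := by
      rw [hT]; simp
    have hTlen : T.length = P.length + ((2 * k + 4) + (phi k S).length) +
        ((L.map (gamma k)).flatten ++ Q).length := by
      rw [hTeq]; simp [gamma, hphiX]; ring
    by_cases hcase : t < P.length + ((2 * k + 4) + (phi k S).length + (2 * k + 4))
    · refine ⟨P.length, ?_, ?_, ht1, ?_⟩
      · rw [hClen]; omega
      · rw [hTeq]; exact occ_core k S X P _ hXl hXh hW
      · rw [hClen]; omega
    · cases L with
      | nil =>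
        exfalso
        simp only [List.length_cons, List.length_nil] at ht2
        omega
      | cons Y L' =>
        have hT2 : T = (P ++ gamma k X) ++ ((Y :: L').map (gamma k)).flatten ++ Q := by
          rw [hT]; simp
        have hPlen : (P ++ gamma k X).length = P.length + ((2 * k + 4) + (phi k S).length) := by
          simp [gamma, hphiX]
        have hmul : ∀ n : ℕ, (n + 1) * ((2 * k + 4) + (phi k S).length) =
            ((2 * k + 4) + (phi k S).length) + n * ((2 * k + 4) + (phi k S).length) := by
          intro n; ring
        refine ih (P ++ gamma k X) Q T (by simp) ?_ hT2 hQ t ?_ ?_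
        · intro Z hZ; exact hmem Z (List.mem_cons_of_mem _ hZ)
        · rw [hPlen]; omega
        · rw [hPlen]
          simp only [List.length_cons] at ht2 ⊢
          rw [hmul (L'.length + 1)] at ht2
          omega

theorem stmt9 (k ℓ m : ℕ) (hm : 1 ≤ m) (hℓ : 1 ≤ ℓ)
    (Ss : List (List Bool)) (hSs : Ss.length = m)
    (hlen : ∀ Si ∈ Ss, Si.length = ℓ)
    (hne : Ss ≠ [])
    (T' : List Bool)
    (hT' : T' = gamma k (Ss.head hne) ++ (Ss.map (gamma k)).flatten ++
      List.replicate (2 * k + 4) true ++ gamma k (Ss.getLast hne) ++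
      List.replicate (2 * k + 4) true)
    (S : List Bool) (hS : S.length = ℓ)
    (hcons : ∀ Si ∈ Ss, ham S Si ≤ k)
    (C : List Bool)
    (hC : C = List.replicate (2 * k + 4) true ++ phi k S ++ List.replicate (2 * k + 4) true) :
    IsApproxCover k C T' ∧ IsApproxSeed k C T' := by
  subst hC
  have hpl : (phi k S).length = ℓ * (4 * k + 12) := by rw [phi_length, hS]
  have hhead := List.head_mem hne
  have hlast := List.getLast_mem hne
  have hheadlen : (phi k (Ss.head hne)).length = (phi k S).length := by
    rw [phi_length, phi_length, hS, hlen _ hhead]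
  have hlastlen : (phi k (Ss.getLast hne)).length = (phi k S).length := by
    rw [phi_length, phi_length, hS, hlen _ hlast]
  have hfl : ((Ss.map (gamma k)).flatten).length = m * ((2 * k + 4) + (phi k S).length) := by
    rw [flatten_len_s9 k ℓ Ss hlen, hSs, hpl]
  have hClen : (List.replicate (2 * k + 4) true ++ phi k S ++
      List.replicate (2 * k + 4) true).length
        = (2 * k + 4) + (phi k S).length + (2 * k + 4) := by
    simp; ring
  have hTlen : T'.length = ((2 * k + 4) + (phi k S).length) +
      m * ((2 * k + 4) + (phi k S).length) + (2 * k + 4) +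
      ((2 * k + 4) + (phi k S).length) + (2 * k + 4) := by
    rw [hT']
    simp [gamma, hfl, hheadlen, hlastlen]
    ring
  have hple : 1 ≤ (phi k S).length := by
    rw [hpl]; exact Nat.one_le_iff_ne_zero.mpr (by positivity)
  have hmle : ((2 * k + 4) + (phi k S).length) ≤ m * ((2 * k + 4) + (phi k S).length) :=
    Nat.le_mul_of_pos_left _ hm
  have hcover : IsApproxCover k (List.replicate (2 * k + 4) true ++ phi k S ++
      List.replicate (2 * k + 4) true) T' := by
    constructor
    · rw [hClen, hTlen]; omega
    · intro t ht
      by_cases hcase : t < (m + 1) * ((2 * k + 4) + (phi k S).length) + (2 * k + 4)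
      · have hmul : (m + 1) * ((2 * k + 4) + (phi k S).length) =
            ((2 * k + 4) + (phi k S).length) + m * ((2 * k + 4) + (phi k S).length) := by ring
        refine cover_aux k S (Ss.head hne :: Ss) []
          (List.replicate (2 * k + 4) true ++ gamma k (Ss.getLast hne) ++
            List.replicate (2 * k + 4) true) T' (by simp) ?_ ?_ ?_ t (by simp) ?_
        · intro X hX
          rcases List.mem_cons.mp hX with h | h
          · subst h; exact ⟨(hlen _ hhead).trans hS.symm, hcons _ hhead⟩
          · exact ⟨(hlen _ h).trans hS.symm, hcons _ h⟩
        · rw [hT']; simp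
        · rw [List.append_assoc]; exact List.prefix_append _ _
        · simp only [List.length_nil, List.length_cons, hSs, Nat.zero_add]
          exact hcase
      · -- final occurrence
        have hsplit : T' = (gamma k (Ss.head hne) ++ (Ss.map (gamma k)).flatten ++
            List.replicate (2 * k + 4) true) ++
            (gamma k (Ss.getLast hne) ++ List.replicate (2 * k + 4) true) := by
          rw [hT']; simp
        have hPlen : (gamma k (Ss.head hne) ++ (Ss.map (gamma k)).flatten ++
            List.replicate (2 * k + 4) true).length =
            (m + 1) * ((2 * k + 4) + (phi k S).length) + (2 * k + 4) := by
          simp [gamma, hfl, hheadlen]; ring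
        have hocc := occ_core k S (Ss.getLast hne)
          (gamma k (Ss.head hne) ++ (Ss.map (gamma k)).flatten ++
            List.replicate (2 * k + 4) true)
          (List.replicate (2 * k + 4) true)
          ((hlen _ hlast).trans hS.symm) (hcons _ hlast) (List.prefix_refl _)
        rw [← hsplit] at hocc
        refine ⟨(gamma k (Ss.head hne) ++ (Ss.map (gamma k)).flatten ++
            List.replicate (2 * k + 4) true).length, ?_, hocc, ?_, ?_⟩
        · rw [hPlen, hClen, hTlen]
          have : (m + 1) * ((2 * k + 4) + (phi k S).length) =
            ((2 * k + 4) + (phi k S).length) + m * ((2 * k + 4) + (phi k S).length) := by ring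
          omega
        · rw [hPlen]; omega
        · rw [hPlen, hClen, hTlen] at *
          have : (m + 1) * ((2 * k + 4) + (phi k S).length) =
            ((2 * k + 4) + (phi k S).length) + m * ((2 * k + 4) + (phi k S).length) := by ring
          omega
  refine ⟨hcover, ?_, T', List.infix_refl _, hcover⟩
  rw [hClen, hTlen]
  omega
end
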